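/- Define the following ℂ-linear subspaces of Fin 5 → ℂ: L₁ = {v : ∑ i, v i = 0, v 1 + v 4 = 0, v 2 + v 3 = 0}, L₂ = {v : ∑ i, v i = 0, v 0 + v 2 = 0, v 3 + v 4 = 0}, L₃ = {v : ∑ i, v i = 0, v 0 + v 4 = 0, v 1 + v 3 = 0}, L₄ = {v : ∑ i, v i = 0, v 0 + v 1 = 0, v 2 + v 4 = 0}, L₅ = {v : ∑ i, v i = 0, v 0 + v 3 = 0, v 1 + v 2 = 0}. Then: (a) each L_j is a 2-dimensional ℂ-subspace; (b) each L_j is contained in the Clebsch cone, i.e. every v ∈ L_j satisfies ∑ i, (v i)³ = 0 (so each L_j is a line lying on the Clebsch cubic surface); (c) for each j ∈ {1,…,5} the vectors c^{j−1} • R₂ and c^{j−1} • R₃ lie in L_j; (d) for j ≠ j', L_j ∩ L_{j'} = {0} (the five lines are pairwise disjoint in ℙ⁴). -/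

import Mathlib

/-- The 5-cycle `(0 1 2 3 4)` on `Fin 5`, sending `i` to `i + 1 (mod 5)`. -/
def c : Equiv.Perm (Fin 5) := finRotate 5

/-- The linear action of a permutation `g` on vectors: `(g • v) i = v (g⁻¹ i)`. -/
def permSMul (g : Equiv.Perm (Fin 5)) (v : Fin 5 → ℂ) : Fin 5 → ℂ := fun i => v (g⁻¹ i)

def R₂ : Fin 5 → ℂ := ![0, -Complex.I, -1, 1, Complex.I]
def R₃ : Fin 5 → ℂ := ![0, Complex.I, -1, 1, -Complex.I]

/-- The linear functional `v ↦ ∑ i, v i`. -/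
noncomputable def linSum : (Fin 5 → ℂ) →ₗ[ℂ] ℂ where
  toFun v := ∑ i, v i
  map_add' x y := by simp [Finset.sum_add_distrib]
  map_smul' m x := by simp [Finset.mul_sum]

/-- The linear functional `v ↦ v a + v b`. -/
def pairLin (a b : Fin 5) : (Fin 5 → ℂ) →ₗ[ℂ] ℂ where
  toFun v := v a + v b
  map_add' x y := by simp; ring
  map_smul' m x := by simp; ring

/-- The five lines `L₁, …, L₅` on the Clebsch cubic, as 2-dimensional linear subspaces
of the cone; `L j` (0-based) is `L_{j+1}` of the paper. -/
noncomputable def L : Fin 5 → Submodule ℂ (Fin 5 → ℂ) :=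
  ![LinearMap.ker linSum ⊓ LinearMap.ker (pairLin 1 4) ⊓ LinearMap.ker (pairLin 2 3),
    LinearMap.ker linSum ⊓ LinearMap.ker (pairLin 0 2) ⊓ LinearMap.ker (pairLin 3 4),
    LinearMap.ker linSum ⊓ LinearMap.ker (pairLin 0 4) ⊓ LinearMap.ker (pairLin 1 3),
    LinearMap.ker linSum ⊓ LinearMap.ker (pairLin 0 1) ⊓ LinearMap.ker (pairLin 2 4),
    LinearMap.ker linSum ⊓ LinearMap.ker (pairLin 0 3) ⊓ LinearMap.ker (pairLin 1 2)]



lemma memL0 (v : Fin 5 → ℂ) : v ∈ L 0 ↔ (v 0 + v 1 + v 2 + v 3 + v 4 = 0 ∧ v 1 + v 4 = 0 ∧ v 2 + v 3 = 0) := by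
  simp [L, Submodule.mem_inf, LinearMap.mem_ker, linSum, pairLin, Fin.sum_univ_five, and_assoc]

lemma memL1 (v : Fin 5 → ℂ) : v ∈ L 1 ↔ (v 0 + v 1 + v 2 + v 3 + v 4 = 0 ∧ v 0 + v 2 = 0 ∧ v 3 + v 4 = 0) := by
  simp [L, Submodule.mem_inf, LinearMap.mem_ker, linSum, pairLin, Fin.sum_univ_five, and_assoc]

lemma memL2 (v : Fin 5 → ℂ) : v ∈ L 2 ↔ (v 0 + v 1 + v 2 + v 3 + v 4 = 0 ∧ v 0 + v 4 = 0 ∧ v 1 + v 3 = 0) := by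
  simp [L, Submodule.mem_inf, LinearMap.mem_ker, linSum, pairLin, Fin.sum_univ_five, and_assoc]

lemma memL3 (v : Fin 5 → ℂ) : v ∈ L 3 ↔ (v 0 + v 1 + v 2 + v 3 + v 4 = 0 ∧ v 0 + v 1 = 0 ∧ v 2 + v 4 = 0) := by
  simp [L, Submodule.mem_inf, LinearMap.mem_ker, linSum, pairLin, Fin.sum_univ_five, and_assoc]

lemma memL4 (v : Fin 5 → ℂ) : v ∈ L 4 ↔ (v 0 + v 1 + v 2 + v 3 + v 4 = 0 ∧ v 0 + v 3 = 0 ∧ v 1 + v 2 = 0) := by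
  simp [L, Submodule.mem_inf, LinearMap.mem_ker, linSum, pairLin, Fin.sum_univ_five, and_assoc]

lemma finrank_span_pair (u w : Fin 5 → ℂ) (a b : Fin 5)
    (h1 : u a = 1) (h2 : w a = 0) (h3 : u b = 0) (h4 : w b = 1) :
    Module.finrank ℂ (Submodule.span ℂ {u, w} : Submodule ℂ (Fin 5 → ℂ)) = 2 := by
  have hli : LinearIndependent ℂ ![u, w] := by
    rw [Fintype.linearIndependent_iff]
    intro g hg
    have ha := congrFun hg a
    have hb := congrFun hg b
    simp [Fin.sum_univ_two, h1, h2, h3, h4] at ha hb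
    intro i; fin_cases i <;> simp [ha, hb]
  have hr : ({u, w} : Set (Fin 5 → ℂ)) = Set.range ![u, w] := by
    ext x; simp [Fin.exists_fin_two, eq_comm]
    tauto
  rw [hr, finrank_span_eq_card hli]
  simp

lemma spanL0 : L 0 = Submodule.span ℂ {![(0 : ℂ), (1 : ℂ), (0 : ℂ), (0 : ℂ), (-1 : ℂ)], ![(0 : ℂ), (0 : ℂ), (1 : ℂ), (-1 : ℂ), (0 : ℂ)]} := by
  apply le_antisymm
  · intro v hv
    rw [memL0 v] at hv
    obtain ⟨hs, h1, h2⟩ := hv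
    rw [Submodule.mem_span_pair]
    refine ⟨v 1, v 2, ?_⟩
    funext i; fin_cases i
    · show v 1 * (0 : ℂ) + v 2 * (0 : ℂ) = v 0
      linear_combination (-1 : ℂ) * hs + (1 : ℂ) * h1 + (1 : ℂ) * h2
    · show v 1 * (1 : ℂ) + v 2 * (0 : ℂ) = v 1
      linear_combination (0 : ℂ) * hs
    · show v 1 * (0 : ℂ) + v 2 * (1 : ℂ) = v 2
      linear_combination (0 : ℂ) * hs
    · show v 1 * (0 : ℂ) + v 2 * (-1 : ℂ) = v 3
      linear_combination (-1 : ℂ) * h2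
    · show v 1 * (-1 : ℂ) + v 2 * (0 : ℂ) = v 4
      linear_combination (-1 : ℂ) * h1
  · rw [Submodule.span_le]
    rintro x hx
    rcases Set.mem_insert_iff.1 hx with rfl | hx
    · rw [SetLike.mem_coe, memL0]; norm_num [Matrix.cons_val_two, Matrix.cons_val_three, Matrix.cons_val_four]
    · rw [Set.mem_singleton_iff] at hx; subst hx
      rw [SetLike.mem_coe, memL0]; norm_num [Matrix.cons_val_two, Matrix.cons_val_three, Matrix.cons_val_four]

lemma spanL1 : L 1 = Submodule.span ℂ {![(1 : ℂ), (0 : ℂ), (-1 : ℂ), (0 : ℂ), (0 : ℂ)], ![(0 : ℂ), (0 : ℂ), (0 : ℂ), (1 : ℂ), (-1 : ℂ)]} := by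
  apply le_antisymm
  · intro v hv
    rw [memL1 v] at hv
    obtain ⟨hs, h1, h2⟩ := hv
    rw [Submodule.mem_span_pair]
    refine ⟨v 0, v 3, ?_⟩
    funext i; fin_cases i
    · show v 0 * (1 : ℂ) + v 3 * (0 : ℂ) = v 0
      linear_combination (0 : ℂ) * hs
    · show v 0 * (0 : ℂ) + v 3 * (0 : ℂ) = v 1
      linear_combination (-1 : ℂ) * hs + (1 : ℂ) * h1 + (1 : ℂ) * h2
    · show v 0 * (-1 : ℂ) + v 3 * (0 : ℂ) = v 2
      linear_combination (-1 : ℂ) * h1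
    · show v 0 * (0 : ℂ) + v 3 * (1 : ℂ) = v 3
      linear_combination (0 : ℂ) * hs
    · show v 0 * (0 : ℂ) + v 3 * (-1 : ℂ) = v 4
      linear_combination (-1 : ℂ) * h2
  · rw [Submodule.span_le]
    rintro x hx
    rcases Set.mem_insert_iff.1 hx with rfl | hx
    · rw [SetLike.mem_coe, memL1]; norm_num [Matrix.cons_val_two, Matrix.cons_val_three, Matrix.cons_val_four]
    · rw [Set.mem_singleton_iff] at hx; subst hx
      rw [SetLike.mem_coe, memL1]; norm_num [Matrix.cons_val_two, Matrix.cons_val_three, Matrix.cons_val_four]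

lemma spanL2 : L 2 = Submodule.span ℂ {![(1 : ℂ), (0 : ℂ), (0 : ℂ), (0 : ℂ), (-1 : ℂ)], ![(0 : ℂ), (1 : ℂ), (0 : ℂ), (-1 : ℂ), (0 : ℂ)]} := by
  apply le_antisymm
  · intro v hv
    rw [memL2 v] at hv
    obtain ⟨hs, h1, h2⟩ := hv
    rw [Submodule.mem_span_pair]
    refine ⟨v 0, v 1, ?_⟩
    funext i; fin_cases i
    · show v 0 * (1 : ℂ) + v 1 * (0 : ℂ) = v 0
      linear_combination (0 : ℂ) * hs
    · show v 0 * (0 : ℂ) + v 1 * (1 : ℂ) = v 1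
      linear_combination (0 : ℂ) * hs
    · show v 0 * (0 : ℂ) + v 1 * (0 : ℂ) = v 2
      linear_combination (-1 : ℂ) * hs + (1 : ℂ) * h1 + (1 : ℂ) * h2
    · show v 0 * (0 : ℂ) + v 1 * (-1 : ℂ) = v 3
      linear_combination (-1 : ℂ) * h2
    · show v 0 * (-1 : ℂ) + v 1 * (0 : ℂ) = v 4
      linear_combination (-1 : ℂ) * h1
  · rw [Submodule.span_le]
    rintro x hx
    rcases Set.mem_insert_iff.1 hx with rfl | hx
    · rw [SetLike.mem_coe, memL2]; norm_num [Matrix.cons_val_two, Matrix.cons_val_three, Matrix.cons_val_four]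
    · rw [Set.mem_singleton_iff] at hx; subst hx
      rw [SetLike.mem_coe, memL2]; norm_num [Matrix.cons_val_two, Matrix.cons_val_three, Matrix.cons_val_four]

lemma spanL3 : L 3 = Submodule.span ℂ {![(1 : ℂ), (-1 : ℂ), (0 : ℂ), (0 : ℂ), (0 : ℂ)], ![(0 : ℂ), (0 : ℂ), (1 : ℂ), (0 : ℂ), (-1 : ℂ)]} := by
  apply le_antisymm
  · intro v hv
    rw [memL3 v] at hv
    obtain ⟨hs, h1, h2⟩ := hv
    rw [Submodule.mem_span_pair]
    refine ⟨v 0, v 2, ?_⟩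
    funext i; fin_cases i
    · show v 0 * (1 : ℂ) + v 2 * (0 : ℂ) = v 0
      linear_combination (0 : ℂ) * hs
    · show v 0 * (-1 : ℂ) + v 2 * (0 : ℂ) = v 1
      linear_combination (-1 : ℂ) * h1
    · show v 0 * (0 : ℂ) + v 2 * (1 : ℂ) = v 2
      linear_combination (0 : ℂ) * hs
    · show v 0 * (0 : ℂ) + v 2 * (0 : ℂ) = v 3
      linear_combination (-1 : ℂ) * hs + (1 : ℂ) * h1 + (1 : ℂ) * h2
    · show v 0 * (0 : ℂ) + v 2 * (-1 : ℂ) = v 4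
      linear_combination (-1 : ℂ) * h2
  · rw [Submodule.span_le]
    rintro x hx
    rcases Set.mem_insert_iff.1 hx with rfl | hx
    · rw [SetLike.mem_coe, memL3]; norm_num [Matrix.cons_val_two, Matrix.cons_val_three, Matrix.cons_val_four]
    · rw [Set.mem_singleton_iff] at hx; subst hx
      rw [SetLike.mem_coe, memL3]; norm_num [Matrix.cons_val_two, Matrix.cons_val_three, Matrix.cons_val_four]

lemma spanL4 : L 4 = Submodule.span ℂ {![(1 : ℂ), (0 : ℂ), (0 : ℂ), (-1 : ℂ), (0 : ℂ)], ![(0 : ℂ), (1 : ℂ), (-1 : ℂ), (0 : ℂ), (0 : ℂ)]} := by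
  apply le_antisymm
  · intro v hv
    rw [memL4 v] at hv
    obtain ⟨hs, h1, h2⟩ := hv
    rw [Submodule.mem_span_pair]
    refine ⟨v 0, v 1, ?_⟩
    funext i; fin_cases i
    · show v 0 * (1 : ℂ) + v 1 * (0 : ℂ) = v 0
      linear_combination (0 : ℂ) * hs
    · show v 0 * (0 : ℂ) + v 1 * (1 : ℂ) = v 1
      linear_combination (0 : ℂ) * hs
    · show v 0 * (0 : ℂ) + v 1 * (-1 : ℂ) = v 2
      linear_combination (-1 : ℂ) * h2
    · show v 0 * (-1 : ℂ) + v 1 * (0 : ℂ) = v 3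
      linear_combination (-1 : ℂ) * h1
    · show v 0 * (0 : ℂ) + v 1 * (0 : ℂ) = v 4
      linear_combination (-1 : ℂ) * hs + (1 : ℂ) * h1 + (1 : ℂ) * h2
  · rw [Submodule.span_le]
    rintro x hx
    rcases Set.mem_insert_iff.1 hx with rfl | hx
    · rw [SetLike.mem_coe, memL4]; norm_num [Matrix.cons_val_two, Matrix.cons_val_three, Matrix.cons_val_four]
    · rw [Set.mem_singleton_iff] at hx; subst hx
      rw [SetLike.mem_coe, memL4]; norm_num [Matrix.cons_val_two, Matrix.cons_val_three, Matrix.cons_val_four]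

lemma pv0_2 : permSMul (c ^ 0) R₂ = ![(0 : ℂ), (-Complex.I : ℂ), (-1 : ℂ), (1 : ℂ), (Complex.I : ℂ)] := by
  funext i; fin_cases i <;> rfl

lemma pv0_3 : permSMul (c ^ 0) R₃ = ![(0 : ℂ), (Complex.I : ℂ), (-1 : ℂ), (1 : ℂ), (-Complex.I : ℂ)] := by
  funext i; fin_cases i <;> rfl

lemma pv1_2 : permSMul (c ^ 1) R₂ = ![(Complex.I : ℂ), (0 : ℂ), (-Complex.I : ℂ), (-1 : ℂ), (1 : ℂ)] := by
  funext i; fin_cases i <;> rfl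

lemma pv1_3 : permSMul (c ^ 1) R₃ = ![(-Complex.I : ℂ), (0 : ℂ), (Complex.I : ℂ), (-1 : ℂ), (1 : ℂ)] := by
  funext i; fin_cases i <;> rfl

lemma pv2_2 : permSMul (c ^ 2) R₂ = ![(1 : ℂ), (Complex.I : ℂ), (0 : ℂ), (-Complex.I : ℂ), (-1 : ℂ)] := by
  funext i; fin_cases i <;> rfl

lemma pv2_3 : permSMul (c ^ 2) R₃ = ![(1 : ℂ), (-Complex.I : ℂ), (0 : ℂ), (Complex.I : ℂ), (-1 : ℂ)] := by
  funext i; fin_cases i <;> rfl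

lemma pv3_2 : permSMul (c ^ 3) R₂ = ![(-1 : ℂ), (1 : ℂ), (Complex.I : ℂ), (0 : ℂ), (-Complex.I : ℂ)] := by
  funext i; fin_cases i <;> rfl

lemma pv3_3 : permSMul (c ^ 3) R₃ = ![(-1 : ℂ), (1 : ℂ), (-Complex.I : ℂ), (0 : ℂ), (Complex.I : ℂ)] := by
  funext i; fin_cases i <;> rfl

lemma pv4_2 : permSMul (c ^ 4) R₂ = ![(-Complex.I : ℂ), (-1 : ℂ), (1 : ℂ), (Complex.I : ℂ), (0 : ℂ)] := by
  funext i; fin_cases i <;> rfl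

lemma pv4_3 : permSMul (c ^ 4) R₃ = ![(Complex.I : ℂ), (-1 : ℂ), (1 : ℂ), (-Complex.I : ℂ), (0 : ℂ)] := by
  funext i; fin_cases i <;> rfl

lemma dis01 : L 0 ⊓ L 1 = ⊥ := by
  rw [Submodule.eq_bot_iff]
  intro v hv
  rw [Submodule.mem_inf, memL0, memL1] at hv
  obtain ⟨⟨hs, h1, h2⟩, _, h3, h4⟩ := hv
  funext i; fin_cases i
  · show v 0 = (0 : ℂ)
    linear_combination (1 : ℂ) * hs + (-1 : ℂ) * h1 + (-1 : ℂ) * h2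
  · show v 1 = (0 : ℂ)
    linear_combination (1 : ℂ) * hs + (-1 : ℂ) * h3 + (-1 : ℂ) * h4
  · show v 2 = (0 : ℂ)
    linear_combination (-1 : ℂ) * hs + (1 : ℂ) * h1 + (1 : ℂ) * h2 + (1 : ℂ) * h3
  · show v 3 = (0 : ℂ)
    linear_combination (1 : ℂ) * hs + (-1 : ℂ) * h1 + (-1 : ℂ) * h3
  · show v 4 = (0 : ℂ)
    linear_combination (-1 : ℂ) * hs + (1 : ℂ) * h1 + (1 : ℂ) * h3 + (1 : ℂ) * h4

lemma dis02 : L 0 ⊓ L 2 = ⊥ := by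
  rw [Submodule.eq_bot_iff]
  intro v hv
  rw [Submodule.mem_inf, memL0, memL2] at hv
  obtain ⟨⟨hs, h1, h2⟩, _, h3, h4⟩ := hv
  funext i; fin_cases i
  · show v 0 = (0 : ℂ)
    linear_combination (1 : ℂ) * hs + (-1 : ℂ) * h1 + (-1 : ℂ) * h2
  · show v 1 = (0 : ℂ)
    linear_combination (1 : ℂ) * hs + (-1 : ℂ) * h2 + (-1 : ℂ) * h3
  · show v 2 = (0 : ℂ)
    linear_combination (1 : ℂ) * hs + (-1 : ℂ) * h3 + (-1 : ℂ) * h4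
  · show v 3 = (0 : ℂ)
    linear_combination (-1 : ℂ) * hs + (1 : ℂ) * h2 + (1 : ℂ) * h3 + (1 : ℂ) * h4
  · show v 4 = (0 : ℂ)
    linear_combination (-1 : ℂ) * hs + (1 : ℂ) * h1 + (1 : ℂ) * h2 + (1 : ℂ) * h3

lemma dis03 : L 0 ⊓ L 3 = ⊥ := by
  rw [Submodule.eq_bot_iff]
  intro v hv
  rw [Submodule.mem_inf, memL0, memL3] at hv
  obtain ⟨⟨hs, h1, h2⟩, _, h3, h4⟩ := hv
  funext i; fin_cases i
  · show v 0 = (0 : ℂ)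
    linear_combination (1 : ℂ) * hs + (-1 : ℂ) * h1 + (-1 : ℂ) * h2
  · show v 1 = (0 : ℂ)
    linear_combination (-1 : ℂ) * hs + (1 : ℂ) * h1 + (1 : ℂ) * h2 + (1 : ℂ) * h3
  · show v 2 = (0 : ℂ)
    linear_combination (-1 : ℂ) * hs + (1 : ℂ) * h2 + (1 : ℂ) * h3 + (1 : ℂ) * h4
  · show v 3 = (0 : ℂ)
    linear_combination (1 : ℂ) * hs + (-1 : ℂ) * h3 + (-1 : ℂ) * h4
  · show v 4 = (0 : ℂ)
    linear_combination (1 : ℂ) * hs + (-1 : ℂ) * h2 + (-1 : ℂ) * h3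

lemma dis04 : L 0 ⊓ L 4 = ⊥ := by
  rw [Submodule.eq_bot_iff]
  intro v hv
  rw [Submodule.mem_inf, memL0, memL4] at hv
  obtain ⟨⟨hs, h1, h2⟩, _, h3, h4⟩ := hv
  funext i; fin_cases i
  · show v 0 = (0 : ℂ)
    linear_combination (1 : ℂ) * hs + (-1 : ℂ) * h1 + (-1 : ℂ) * h2
  · show v 1 = (0 : ℂ)
    linear_combination (-1 : ℂ) * hs + (1 : ℂ) * h1 + (1 : ℂ) * h3 + (1 : ℂ) * h4
  · show v 2 = (0 : ℂ)
    linear_combination (1 : ℂ) * hs + (-1 : ℂ) * h1 + (-1 : ℂ) * h3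
  · show v 3 = (0 : ℂ)
    linear_combination (-1 : ℂ) * hs + (1 : ℂ) * h1 + (1 : ℂ) * h2 + (1 : ℂ) * h3
  · show v 4 = (0 : ℂ)
    linear_combination (1 : ℂ) * hs + (-1 : ℂ) * h3 + (-1 : ℂ) * h4

lemma dis12 : L 1 ⊓ L 2 = ⊥ := by
  rw [Submodule.eq_bot_iff]
  intro v hv
  rw [Submodule.mem_inf, memL1, memL2] at hv
  obtain ⟨⟨hs, h1, h2⟩, _, h3, h4⟩ := hv
  funext i; fin_cases i
  · show v 0 = (0 : ℂ)
    linear_combination (-1 : ℂ) * hs + (1 : ℂ) * h1 + (1 : ℂ) * h3 + (1 : ℂ) * h4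
  · show v 1 = (0 : ℂ)
    linear_combination (1 : ℂ) * hs + (-1 : ℂ) * h1 + (-1 : ℂ) * h2
  · show v 2 = (0 : ℂ)
    linear_combination (1 : ℂ) * hs + (-1 : ℂ) * h3 + (-1 : ℂ) * h4
  · show v 3 = (0 : ℂ)
    linear_combination (-1 : ℂ) * hs + (1 : ℂ) * h1 + (1 : ℂ) * h2 + (1 : ℂ) * h4
  · show v 4 = (0 : ℂ)
    linear_combination (1 : ℂ) * hs + (-1 : ℂ) * h1 + (-1 : ℂ) * h4

lemma dis13 : L 1 ⊓ L 3 = ⊥ := by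
  rw [Submodule.eq_bot_iff]
  intro v hv
  rw [Submodule.mem_inf, memL1, memL3] at hv
  obtain ⟨⟨hs, h1, h2⟩, _, h3, h4⟩ := hv
  funext i; fin_cases i
  · show v 0 = (0 : ℂ)
    linear_combination (-1 : ℂ) * hs + (1 : ℂ) * h1 + (1 : ℂ) * h2 + (1 : ℂ) * h3
  · show v 1 = (0 : ℂ)
    linear_combination (1 : ℂ) * hs + (-1 : ℂ) * h1 + (-1 : ℂ) * h2
  · show v 2 = (0 : ℂ)
    linear_combination (1 : ℂ) * hs + (-1 : ℂ) * h2 + (-1 : ℂ) * h3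
  · show v 3 = (0 : ℂ)
    linear_combination (1 : ℂ) * hs + (-1 : ℂ) * h3 + (-1 : ℂ) * h4
  · show v 4 = (0 : ℂ)
    linear_combination (-1 : ℂ) * hs + (1 : ℂ) * h2 + (1 : ℂ) * h3 + (1 : ℂ) * h4

lemma dis14 : L 1 ⊓ L 4 = ⊥ := by
  rw [Submodule.eq_bot_iff]
  intro v hv
  rw [Submodule.mem_inf, memL1, memL4] at hv
  obtain ⟨⟨hs, h1, h2⟩, _, h3, h4⟩ := hv
  funext i; fin_cases i
  · show v 0 = (0 : ℂ)
    linear_combination (1 : ℂ) * hs + (-1 : ℂ) * h2 + (-1 : ℂ) * h4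
  · show v 1 = (0 : ℂ)
    linear_combination (1 : ℂ) * hs + (-1 : ℂ) * h1 + (-1 : ℂ) * h2
  · show v 2 = (0 : ℂ)
    linear_combination (-1 : ℂ) * hs + (1 : ℂ) * h1 + (1 : ℂ) * h2 + (1 : ℂ) * h4
  · show v 3 = (0 : ℂ)
    linear_combination (-1 : ℂ) * hs + (1 : ℂ) * h2 + (1 : ℂ) * h3 + (1 : ℂ) * h4
  · show v 4 = (0 : ℂ)
    linear_combination (1 : ℂ) * hs + (-1 : ℂ) * h3 + (-1 : ℂ) * h4

lemma dis23 : L 2 ⊓ L 3 = ⊥ := by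
  rw [Submodule.eq_bot_iff]
  intro v hv
  rw [Submodule.mem_inf, memL2, memL3] at hv
  obtain ⟨⟨hs, h1, h2⟩, _, h3, h4⟩ := hv
  funext i; fin_cases i
  · show v 0 = (0 : ℂ)
    linear_combination (1 : ℂ) * hs + (-1 : ℂ) * h2 + (-1 : ℂ) * h4
  · show v 1 = (0 : ℂ)
    linear_combination (-1 : ℂ) * hs + (1 : ℂ) * h2 + (1 : ℂ) * h3 + (1 : ℂ) * h4
  · show v 2 = (0 : ℂ)
    linear_combination (1 : ℂ) * hs + (-1 : ℂ) * h1 + (-1 : ℂ) * h2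
  · show v 3 = (0 : ℂ)
    linear_combination (1 : ℂ) * hs + (-1 : ℂ) * h3 + (-1 : ℂ) * h4
  · show v 4 = (0 : ℂ)
    linear_combination (-1 : ℂ) * hs + (1 : ℂ) * h1 + (1 : ℂ) * h2 + (1 : ℂ) * h4

lemma dis24 : L 2 ⊓ L 4 = ⊥ := by
  rw [Submodule.eq_bot_iff]
  intro v hv
  rw [Submodule.mem_inf, memL2, memL4] at hv
  obtain ⟨⟨hs, h1, h2⟩, _, h3, h4⟩ := hv
  funext i; fin_cases i
  · show v 0 = (0 : ℂ)
    linear_combination (-1 : ℂ) * hs + (1 : ℂ) * h1 + (1 : ℂ) * h3 + (1 : ℂ) * h4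
  · show v 1 = (0 : ℂ)
    linear_combination (-1 : ℂ) * hs + (1 : ℂ) * h1 + (1 : ℂ) * h2 + (1 : ℂ) * h4
  · show v 2 = (0 : ℂ)
    linear_combination (1 : ℂ) * hs + (-1 : ℂ) * h1 + (-1 : ℂ) * h2
  · show v 3 = (0 : ℂ)
    linear_combination (1 : ℂ) * hs + (-1 : ℂ) * h1 + (-1 : ℂ) * h4
  · show v 4 = (0 : ℂ)
    linear_combination (1 : ℂ) * hs + (-1 : ℂ) * h3 + (-1 : ℂ) * h4

lemma dis34 : L 3 ⊓ L 4 = ⊥ := by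
  rw [Submodule.eq_bot_iff]
  intro v hv
  rw [Submodule.mem_inf, memL3, memL4] at hv
  obtain ⟨⟨hs, h1, h2⟩, _, h3, h4⟩ := hv
  funext i; fin_cases i
  · show v 0 = (0 : ℂ)
    linear_combination (-1 : ℂ) * hs + (1 : ℂ) * h1 + (1 : ℂ) * h2 + (1 : ℂ) * h3
  · show v 1 = (0 : ℂ)
    linear_combination (1 : ℂ) * hs + (-1 : ℂ) * h2 + (-1 : ℂ) * h3
  · show v 2 = (0 : ℂ)
    linear_combination (-1 : ℂ) * hs + (1 : ℂ) * h2 + (1 : ℂ) * h3 + (1 : ℂ) * h4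
  · show v 3 = (0 : ℂ)
    linear_combination (1 : ℂ) * hs + (-1 : ℂ) * h1 + (-1 : ℂ) * h2
  · show v 4 = (0 : ℂ)
    linear_combination (1 : ℂ) * hs + (-1 : ℂ) * h3 + (-1 : ℂ) * h4

theorem stmt4 :
    (∀ j : Fin 5, Module.finrank ℂ (L j) = 2) ∧
    (∀ j : Fin 5, ∀ v ∈ L j, (∑ i, (v i) ^ 3) = 0) ∧
    (∀ j : Fin 5, permSMul (c ^ (j : ℕ)) R₂ ∈ L j ∧ permSMul (c ^ (j : ℕ)) R₃ ∈ L j) ∧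
    (∀ j j' : Fin 5, j ≠ j' → L j ⊓ L j' = ⊥) := by
  refine ⟨?_, ?_, ?_, ?_⟩
  · intro j; fin_cases j
    · show Module.finrank ℂ (L 0) = 2
      rw [spanL0]
      exact finrank_span_pair _ _ 1 2 (by norm_num [Matrix.cons_val_two, Matrix.cons_val_three, Matrix.cons_val_four]) (by norm_num [Matrix.cons_val_two, Matrix.cons_val_three, Matrix.cons_val_four]) (by norm_num [Matrix.cons_val_two, Matrix.cons_val_three, Matrix.cons_val_four]) (by norm_num [Matrix.cons_val_two, Matrix.cons_val_three, Matrix.cons_val_four])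
    · show Module.finrank ℂ (L 1) = 2
      rw [spanL1]
      exact finrank_span_pair _ _ 0 3 (by norm_num [Matrix.cons_val_two, Matrix.cons_val_three, Matrix.cons_val_four]) (by norm_num [Matrix.cons_val_two, Matrix.cons_val_three, Matrix.cons_val_four]) (by norm_num [Matrix.cons_val_two, Matrix.cons_val_three, Matrix.cons_val_four]) (by norm_num [Matrix.cons_val_two, Matrix.cons_val_three, Matrix.cons_val_four])
    · show Module.finrank ℂ (L 2) = 2
      rw [spanL2]
      exact finrank_span_pair _ _ 0 1 (by norm_num) (by norm_num) (by norm_num) (by norm_num)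
    · show Module.finrank ℂ (L 3) = 2
      rw [spanL3]
      exact finrank_span_pair _ _ 0 2 (by norm_num [Matrix.cons_val_two, Matrix.cons_val_three, Matrix.cons_val_four]) (by norm_num [Matrix.cons_val_two, Matrix.cons_val_three, Matrix.cons_val_four]) (by norm_num [Matrix.cons_val_two, Matrix.cons_val_three, Matrix.cons_val_four]) (by norm_num [Matrix.cons_val_two, Matrix.cons_val_three, Matrix.cons_val_four])
    · show Module.finrank ℂ (L 4) = 2
      rw [spanL4]
      exact finrank_span_pair _ _ 0 1 (by norm_num) (by norm_num) (by norm_num) (by norm_num)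
  · intro j v hv; fin_cases j
    · obtain ⟨hs, h1, h2⟩ := (memL0 v).1 hv
      rw [Fin.sum_univ_five]
      linear_combination (v 0)^2 * hs + ((v 1)^2 - v 1 * v 4 + (v 4)^2 - (v 0)^2) * h1 + ((v 2)^2 - v 2 * v 3 + (v 3)^2 - (v 0)^2) * h2
    · obtain ⟨hs, h1, h2⟩ := (memL1 v).1 hv
      rw [Fin.sum_univ_five]
      linear_combination (v 1)^2 * hs + ((v 0)^2 - v 0 * v 2 + (v 2)^2 - (v 1)^2) * h1 + ((v 3)^2 - v 3 * v 4 + (v 4)^2 - (v 1)^2) * h2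
    · obtain ⟨hs, h1, h2⟩ := (memL2 v).1 hv
      rw [Fin.sum_univ_five]
      linear_combination (v 2)^2 * hs + ((v 0)^2 - v 0 * v 4 + (v 4)^2 - (v 2)^2) * h1 + ((v 1)^2 - v 1 * v 3 + (v 3)^2 - (v 2)^2) * h2
    · obtain ⟨hs, h1, h2⟩ := (memL3 v).1 hv
      rw [Fin.sum_univ_five]
      linear_combination (v 3)^2 * hs + ((v 0)^2 - v 0 * v 1 + (v 1)^2 - (v 3)^2) * h1 + ((v 2)^2 - v 2 * v 4 + (v 4)^2 - (v 3)^2) * h2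
    · obtain ⟨hs, h1, h2⟩ := (memL4 v).1 hv
      rw [Fin.sum_univ_five]
      linear_combination (v 4)^2 * hs + ((v 0)^2 - v 0 * v 3 + (v 3)^2 - (v 4)^2) * h1 + ((v 1)^2 - v 1 * v 2 + (v 2)^2 - (v 4)^2) * h2
  · intro j; fin_cases j
    · constructor
      · show permSMul (c ^ 0) R₂ ∈ L 0
        rw [pv0_2, memL0]
        norm_num [Matrix.cons_val_two, Matrix.cons_val_three, Matrix.cons_val_four]
      · show permSMul (c ^ 0) R₃ ∈ L 0
        rw [pv0_3, memL0]
        norm_num [Matrix.cons_val_two, Matrix.cons_val_three, Matrix.cons_val_four]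
    · constructor
      · show permSMul (c ^ 1) R₂ ∈ L 1
        rw [pv1_2, memL1]
        norm_num [Matrix.cons_val_two, Matrix.cons_val_three, Matrix.cons_val_four]
      · show permSMul (c ^ 1) R₃ ∈ L 1
        rw [pv1_3, memL1]
        norm_num [Matrix.cons_val_two, Matrix.cons_val_three, Matrix.cons_val_four]
    · constructor
      · show permSMul (c ^ 2) R₂ ∈ L 2
        rw [pv2_2, memL2]
        norm_num [Matrix.cons_val_two, Matrix.cons_val_three, Matrix.cons_val_four]
      · show permSMul (c ^ 2) R₃ ∈ L 2
        rw [pv2_3, memL2]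
        norm_num [Matrix.cons_val_two, Matrix.cons_val_three, Matrix.cons_val_four]
    · constructor
      · show permSMul (c ^ 3) R₂ ∈ L 3
        rw [pv3_2, memL3]
        norm_num [Matrix.cons_val_two, Matrix.cons_val_three, Matrix.cons_val_four]
      · show permSMul (c ^ 3) R₃ ∈ L 3
        rw [pv3_3, memL3]
        norm_num [Matrix.cons_val_two, Matrix.cons_val_three, Matrix.cons_val_four]
    · constructor
      · show permSMul (c ^ 4) R₂ ∈ L 4
        rw [pv4_2, memL4]
        norm_num [Matrix.cons_val_two, Matrix.cons_val_three, Matrix.cons_val_four]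
      · show permSMul (c ^ 4) R₃ ∈ L 4
        rw [pv4_3, memL4]
        norm_num [Matrix.cons_val_two, Matrix.cons_val_three, Matrix.cons_val_four]
  · intro j j' hne; fin_cases j <;> fin_cases j'
    · exact absurd rfl hne
    · exact dis01
    · exact dis02
    · exact dis03
    · exact dis04
    · rw [inf_comm]; exact dis01
    · exact absurd rfl hne
    · exact dis12
    · exact dis13
    · exact dis14
    · rw [inf_comm]; exact dis02
    · rw [inf_comm]; exact dis12
    · exact absurd rfl hne
    · exact dis23
    · exact dis24
    · rw [inf_comm]; exact dis03
    · rw [inf_comm]; exact dis13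
    · rw [inf_comm]; exact dis23
    · exact absurd rfl hne
    · exact dis34
    · rw [inf_comm]; exact dis04
    · rw [inf_comm]; exact dis14
    · rw [inf_comm]; exact dis24
    · rw [inf_comm]; exact dis34
    · exact absurd rfl hne
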